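/- Let φ : ℝ → ℝ be twice continuously differentiable, convex and non-decreasing. Then for all real u and h ≤ u (and indeed all real h, u), (φ(u) - φ(h))₊ - φ'(h)·(u - h)₊ = ∫_ℝ (u - k)₊ · χ_{[k > h]} · φ''(k) dk, where x₊ = max(x, 0). -/
import Mathlib

theorem stmt_2 (φ : ℝ → ℝ) (hφ : ContDiff ℝ 2 φ)
    (hconv : ConvexOn ℝ Set.univ φ) (hmono : Monotone φ) (u h : ℝ) :
    max (φ u - φ h) 0 - deriv φ h * max (u - h) 0
      = ∫ k : ℝ, max (u - k) 0 * Set.indicator {k : ℝ | h < k}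
          (fun k => deriv (deriv φ) k) k := by
  have hdiff : Differentiable ℝ φ := hφ.differentiable (by norm_num)
  have hφ1 : ContDiff ℝ 1 (deriv φ) := by
    have := (contDiff_succ_iff_deriv (n := 1)).mp (by exact_mod_cast hφ)
    exact this.2.2
  have hdiff1 : Differentiable ℝ (deriv φ) := hφ1.differentiable (by norm_num)
  have hcont2 : Continuous (deriv (deriv φ)) := hφ1.continuous_deriv (le_refl _)
  rcases le_or_gt u h with hu | hu
  · have h1 : max (φ u - φ h) 0 = 0 := max_eq_right (by linarith [hmono hu])
    have h2 : max (u - h) 0 = 0 := max_eq_right (by linarith)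
    rw [h1, h2, mul_zero, sub_zero]
    rw [show (∫ k : ℝ, max (u - k) 0 * Set.indicator {k : ℝ | h < k}
        (fun k => deriv (deriv φ) k) k) = ∫ _ : ℝ, (0:ℝ) from ?_]
    · simp
    · congr 1; funext k
      simp only [Set.indicator_apply, Set.mem_setOf_eq]
      by_cases hk : h < k
      · simp [hk, max_eq_right (by linarith : u - k ≤ 0)]
      · simp [hk]
  · have h1 : max (φ u - φ h) 0 = φ u - φ h := max_eq_left (by linarith [hmono hu.le])
    have h2 : max (u - h) 0 = u - h := max_eq_left (by linarith)
    rw [h1, h2]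
    have heq : (fun k : ℝ => max (u - k) 0 * Set.indicator {k : ℝ | h < k}
        (fun k => deriv (deriv φ) k) k)
        = Set.indicator (Set.Ioc h u) (fun k => (u - k) * deriv (deriv φ) k) := by
      funext k
      simp only [Set.indicator_apply, Set.mem_setOf_eq, Set.mem_Ioc]
      by_cases hk : h < k
      · by_cases hk2 : k ≤ u
        · simp [hk, hk2, max_eq_left (by linarith : (0:ℝ) ≤ u - k)]
        · simp [hk, hk2, max_eq_right (by linarith : u - k ≤ 0)]
      · simp [hk]
    rw [heq, MeasureTheory.integral_indicator measurableSet_Ioc,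
      ← intervalIntegral.integral_of_le hu.le]
    have hder1 : ∀ x ∈ Set.uIcc h u, HasDerivAt (fun k : ℝ => u - k) (-1) x := by
      intro x _
      simpa using (hasDerivAt_id x).const_sub u
    have hder2 : ∀ x ∈ Set.uIcc h u, HasDerivAt (deriv φ) (deriv (deriv φ) x) x := by
      intro x _
      exact (hdiff1 x).hasDerivAt
    have hint1 : IntervalIntegrable (fun _ : ℝ => (-1 : ℝ)) MeasureTheory.volume h u :=
      intervalIntegrable_const
    have hint2 : IntervalIntegrable (deriv (deriv φ)) MeasureTheory.volume h u :=
      hcont2.intervalIntegrable h u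
    have hparts := intervalIntegral.integral_mul_deriv_eq_deriv_mul hder1 hder2 hint1 hint2
    rw [hparts]
    have : (∫ x in h..u, (-1 : ℝ) * deriv φ x) = -∫ x in h..u, deriv φ x := by
      simp [intervalIntegral.integral_neg]
    rw [this, intervalIntegral.integral_deriv_eq_sub (fun x _ => hdiff x)
      ((hφ1.continuous).intervalIntegrable h u)]
    ring
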